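/- Let a > 0. Define, for t > 0 and z, w ∈ ℂ, the kernel J_a(z,w,t) = e^{-at/2} · (cosh(at))^{-1/2} · exp( (a/4)·(conj(w)² − z²)·tanh(at) + a·z·conj(w) / (2·cosh(at)) ). Then for every fixed w ∈ ℂ, the function (t,z) ↦ J_a(z,w,t) satisfies the heat equation for the complex harmonic oscillator: ∂J/∂t (z,w,t) = ∂²J/∂z² (z,w,t) − (a²z²/4)·J(z,w,t) − (a/2)·J(z,w,t) for all t > 0 and z ∈ ℂ. -/

import Mathlib

open Complex Real

/-- The heat kernel of the complex harmonic oscillator. -/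
noncomputable def complexOscKernel (a : ℝ) (z w : ℂ) (t : ℝ) : ℂ :=
  (Real.exp (-(a * t) / 2) : ℂ) * ((Real.sqrt (Real.cosh (a * t)) : ℂ))⁻¹ *
    Complex.exp ((a / 4) * ((starRingEnd ℂ) w ^ 2 - z ^ 2) * (Real.tanh (a * t) : ℂ)
      + a * z * (starRingEnd ℂ) w / (2 * (Real.cosh (a * t) : ℂ)))

private lemma osc_aux (A U Sinv Q T C z W : ℂ) (hC : C ≠ 0) (hT2C : T^2*C^2 = C^2 - 1) :
    (-A / 2 * U * Sinv + U * (-A / 2 * T * Sinv)) * Q +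
      U * Sinv * (Q * (A ^ 2 / 4 * (W ^ 2 - z ^ 2) / C ^ 2 - A ^ 2 * z * W * T / (2 * C)))
    = U * Sinv * (Q * (-(A / 2) * T * z + A * W / (2 * C)) * (-(A / 2) * T * z + A * W / (2 * C))
          + Q * (-(A / 2) * T))
        - A ^ 2 * z ^ 2 / 4 * (U * Sinv * Q) - A / 2 * (U * Sinv * Q) := by
  have hscal : (-A / 2 + -A / 2 * T) + (A ^ 2 / 4 * (W ^ 2 - z ^ 2) / C ^ 2
        - A ^ 2 * z * W * T / (2 * C))
      = (-(A / 2) * T * z + A * W / (2 * C)) * (-(A / 2) * T * z + A * W / (2 * C))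
        + (-(A / 2) * T) - A ^ 2 * z ^ 2 / 4 - A / 2 := by
    have hCi : C * C⁻¹ = 1 := mul_inv_cancel₀ hC
    linear_combination (-(A^2*z^2/4) * C⁻¹^2) * hT2C
      + ((A^2*z^2/4) * (C*C⁻¹+1) * (T^2-1)) * hCi
  linear_combination (U * Sinv * Q) * hscal


/-- For each fixed `w`, the kernel `J_a(z,w,t)` satisfies the heat equation for the
complex harmonic oscillator `∂J/∂t = ∂²J/∂z² − (a²z²/4)J − (a/2)J` for `t > 0`. -/
theorem complexOscKernel_heat (a : ℝ) (ha : 0 < a) (w : ℂ) :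
    ∀ (t : ℝ), 0 < t → ∀ (z : ℂ),
      deriv (fun t' : ℝ => complexOscKernel a z w t') t =
        iteratedDeriv 2 (fun z' : ℂ => complexOscKernel a z' w t) z
          - ((a : ℂ) ^ 2 * z ^ 2 / 4) * complexOscKernel a z w t
          - ((a : ℂ) / 2) * complexOscKernel a z w t := by
  intro t ht z
  set W : ℂ := (starRingEnd ℂ) w with hWdef
  have hc : 0 < Real.cosh (a * t) := Real.cosh_pos _
  have hs : 0 < Real.sqrt (Real.cosh (a * t)) := Real.sqrt_pos.mpr hc
  have hC : ((Real.cosh (a * t) : ℂ)) ≠ 0 := by exact_mod_cast hc.ne'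
  have hS : ((Real.sqrt (Real.cosh (a * t)) : ℂ)) ≠ 0 := by exact_mod_cast hs.ne'
  have h2C : (2 * (Real.cosh (a * t) : ℂ)) ≠ 0 := by
    exact mul_ne_zero two_ne_zero hC
  have hC' : Complex.cosh ((a : ℂ) * (t : ℂ)) ≠ 0 := by
    rw [← Complex.ofReal_mul, ← Complex.ofReal_cosh]; exact_mod_cast hc.ne'
  have hs2 : Real.sqrt (Real.cosh (a * t)) ^ 2 = Real.cosh (a * t) :=
    Real.sq_sqrt hc.le
  have htc : Real.tanh (a * t) * Real.cosh (a * t) = Real.sinh (a * t) := by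
    rw [Real.tanh_eq_sinh_div_cosh]; field_simp
  -- ℂ versions
  have hS2 : ((Real.sqrt (Real.cosh (a * t)) : ℂ)) ^ 2 = (Real.cosh (a * t) : ℂ) := by
    exact_mod_cast congrArg Complex.ofReal hs2
  have hT2C : ((Real.tanh (a * t) : ℂ)) ^ 2 * ((Real.cosh (a * t) : ℂ)) ^ 2
      = ((Real.cosh (a * t) : ℂ)) ^ 2 - 1 := by
    have h1 : ((Real.tanh (a*t) : ℂ)) * (Real.cosh (a*t) : ℂ) = (Real.sinh (a*t) : ℂ) := by
      exact_mod_cast congrArg Complex.ofReal htc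
    have h2 : ((Real.cosh (a*t) : ℂ))^2 - ((Real.sinh (a*t) : ℂ))^2 = 1 := by
      exact_mod_cast congrArg Complex.ofReal (Real.cosh_sq_sub_sinh_sq (a*t))
    linear_combination (((Real.tanh (a*t) : ℂ)) * (Real.cosh (a*t) : ℂ)
      + (Real.sinh (a*t) : ℂ)) * h1 - h2
  -- time derivatives of the real building blocks
  have hat : HasDerivAt (fun t' : ℝ => a * t') a t := by
    simpa using (hasDerivAt_id t).const_mul a
  have hcosh : HasDerivAt (fun t' : ℝ => Real.cosh (a * t')) (Real.sinh (a * t) * a) t :=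
    (Real.hasDerivAt_cosh (a * t)).comp t hat
  have hsinh : HasDerivAt (fun t' : ℝ => Real.sinh (a * t')) (Real.cosh (a * t) * a) t :=
    (Real.hasDerivAt_sinh (a * t)).comp t hat
  -- u : exponential damping factor
  have hu : HasDerivAt (fun t' : ℝ => ((Real.exp (-(a * t') / 2) : ℝ) : ℂ))
      ((-(a : ℂ) / 2) * ((Real.exp (-(a * t) / 2) : ℝ) : ℂ)) t := by
    have h1 : HasDerivAt (fun t' : ℝ => -(a * t') / 2) (-a / 2) t := by
      simpa using (((hasDerivAt_id t).const_mul a).neg.div_const 2)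
    have h2 := ((Real.hasDerivAt_exp (-(a * t) / 2)).comp t h1).ofReal_comp
    refine h2.congr_deriv ?_
    push_cast
    ring
  -- v : inverse square root of cosh
  have hv : HasDerivAt (fun t' : ℝ => (((Real.sqrt (Real.cosh (a * t')) : ℝ) : ℂ))⁻¹)
      ((-(a : ℂ) / 2) * ((Real.tanh (a * t) : ℝ) : ℂ)
        * (((Real.sqrt (Real.cosh (a * t)) : ℝ) : ℂ))⁻¹) t := by
    have h1 : HasDerivAt (fun t' : ℝ => Real.sqrt (Real.cosh (a * t')))
        (1 / (2 * Real.sqrt (Real.cosh (a * t))) * (Real.sinh (a * t) * a)) t :=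
      (Real.hasDerivAt_sqrt hc.ne').comp t hcosh
    have h2 : HasDerivAt (fun t' : ℝ => (((Real.sqrt (Real.cosh (a * t')) : ℝ) : ℂ))⁻¹)
        (-((((Real.sqrt (Real.cosh (a*t)) : ℝ) : ℂ)) ^ 2)⁻¹
          * (((1 / (2 * Real.sqrt (Real.cosh (a*t))) * (Real.sinh (a*t) * a) : ℝ)) : ℂ)) t := by
      have h1c := h1.ofReal_comp
      exact (hasDerivAt_inv hS).comp t h1c
    convert h2 using 1
    have hsc : ((Real.sinh (a*t) : ℂ)) = ((Real.tanh (a*t) : ℂ)) * (Real.cosh (a*t) : ℂ) := by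
      exact_mod_cast congrArg Complex.ofReal htc.symm
    simp only [Complex.ofReal_mul, Complex.ofReal_div, Complex.ofReal_one, Complex.ofReal_ofNat]
    rw [hsc]
    have hS2' := hS2
    push_cast at hS2' ⊢
    field_simp
    rw [← hS2']
  -- tanh derivative
  have htanh : HasDerivAt (fun t' : ℝ => Real.tanh (a * t')) (a / Real.cosh (a * t) ^ 2) t := by
    have h1 : HasDerivAt (fun t' : ℝ => Real.sinh (a * t') / Real.cosh (a * t'))
        ((Real.cosh (a*t) * a * Real.cosh (a*t) - Real.sinh (a*t) * (Real.sinh (a*t) * a))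
          / Real.cosh (a*t) ^ 2) t := hsinh.div hcosh hc.ne'
    have h2 : (fun t' : ℝ => Real.sinh (a * t') / Real.cosh (a * t'))
        = fun t' : ℝ => Real.tanh (a * t') := by
      funext x; rw [Real.tanh_eq_sinh_div_cosh]
    rw [h2] at h1
    convert h1 using 1
    have := Real.cosh_sq_sub_sinh_sq (a * t)
    field_simp
    nlinarith [this]
  -- the exponent as a function of time
  have hphi : HasDerivAt (fun t' : ℝ =>
      ((a : ℂ) / 4) * (W ^ 2 - z ^ 2) * ((Real.tanh (a * t') : ℝ) : ℂ)
        + (a : ℂ) * z * W / (2 * ((Real.cosh (a * t') : ℝ) : ℂ)))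
      (((a : ℂ) ^ 2 / 4) * (W ^ 2 - z ^ 2) / ((Real.cosh (a * t) : ℝ) : ℂ) ^ 2
        - (a : ℂ) ^ 2 * z * W * ((Real.tanh (a * t) : ℝ) : ℂ)
          / (2 * ((Real.cosh (a * t) : ℝ) : ℂ))) t := by
    have t1 := (htanh.ofReal_comp).const_mul (((a : ℂ) / 4) * (W ^ 2 - z ^ 2))
    have t2 : HasDerivAt (fun t' : ℝ => (a : ℂ) * z * W / (2 * ((Real.cosh (a * t') : ℝ) : ℂ)))
        ((0 * (2 * ((Real.cosh (a*t) : ℝ) : ℂ)) - (a : ℂ) * z * W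
          * (2 * ((Real.sinh (a*t) * a : ℝ) : ℂ))) / (2 * ((Real.cosh (a*t) : ℝ) : ℂ)) ^ 2) t :=
      (hasDerivAt_const t ((a:ℂ) * z * W)).div ((hcosh.ofReal_comp).const_mul 2) h2C
    have h := t1.add t2
    refine h.congr_deriv ?_
    have hsc : ((Real.sinh (a*t) : ℂ)) = ((Real.tanh (a*t) : ℂ)) * (Real.cosh (a*t) : ℂ) := by
      exact_mod_cast congrArg Complex.ofReal htc.symm
    simp only [Complex.ofReal_mul, Complex.ofReal_div, Complex.ofReal_one, Complex.ofReal_ofNat,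
      Complex.ofReal_pow]
    rw [hsc]
    push_cast
    field_simp [hC']
    ring
  -- full time derivative
  have hJ : HasDerivAt (fun t' : ℝ => complexOscKernel a z w t')
      ((((-(a : ℂ) / 2) * ((Real.exp (-(a * t) / 2) : ℝ) : ℂ))
          * (((Real.sqrt (Real.cosh (a * t)) : ℝ) : ℂ))⁻¹
        + ((Real.exp (-(a * t) / 2) : ℝ) : ℂ)
          * ((-(a : ℂ) / 2) * ((Real.tanh (a * t) : ℝ) : ℂ)
             * (((Real.sqrt (Real.cosh (a * t)) : ℝ) : ℂ))⁻¹))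
        * Complex.exp (((a : ℂ) / 4) * (W ^ 2 - z ^ 2) * ((Real.tanh (a * t) : ℝ) : ℂ)
            + (a : ℂ) * z * W / (2 * ((Real.cosh (a * t) : ℝ) : ℂ)))
      + (((Real.exp (-(a * t) / 2) : ℝ) : ℂ)
          * (((Real.sqrt (Real.cosh (a * t)) : ℝ) : ℂ))⁻¹)
        * (Complex.exp (((a : ℂ) / 4) * (W ^ 2 - z ^ 2) * ((Real.tanh (a * t) : ℝ) : ℂ)
            + (a : ℂ) * z * W / (2 * ((Real.cosh (a * t) : ℝ) : ℂ)))
          * (((a : ℂ) ^ 2 / 4) * (W ^ 2 - z ^ 2) / ((Real.cosh (a * t) : ℝ) : ℂ) ^ 2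
            - (a : ℂ) ^ 2 * z * W * ((Real.tanh (a * t) : ℝ) : ℂ)
              / (2 * ((Real.cosh (a * t) : ℝ) : ℂ))))) t := by
    have := (hu.mul hv).mul hphi.cexp
    simpa only [complexOscKernel, Pi.mul_def, ← hWdef] using this
  rw [hJ.deriv]
  -- space derivatives
  set K : ℂ := ((Real.exp (-(a * t) / 2) : ℝ) : ℂ)
      * (((Real.sqrt (Real.cosh (a * t)) : ℝ) : ℂ))⁻¹ with hKdef
  set T : ℂ := ((Real.tanh (a * t) : ℝ) : ℂ) with hTdef
  set C : ℂ := ((Real.cosh (a * t) : ℝ) : ℂ) with hCdef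
  have hg : ∀ y : ℂ, HasDerivAt (fun y : ℂ => (a : ℂ) / 4 * (W ^ 2 - y ^ 2) * T
      + (a : ℂ) * y * W / (2 * C)) (-((a:ℂ)/2) * T * y + (a:ℂ) * W / (2 * C)) y := by
    intro y
    have t1 : HasDerivAt (fun y : ℂ => (a : ℂ) / 4 * (W ^ 2 - y ^ 2) * T)
        (((a:ℂ)/4) * (-(2 * y ^ 1)) * T) y :=
      (((hasDerivAt_pow 2 y).const_sub (W^2)).const_mul ((a:ℂ)/4)).mul_const T
    have t2 : HasDerivAt (fun y : ℂ => (a : ℂ) * y * W / (2 * C))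
        ((a:ℂ) * 1 * W / (2 * C)) y := by
      simpa using (((hasDerivAt_id y).const_mul (a:ℂ)).mul_const W).div_const (2*C)
    have := t1.add t2
    refine this.congr_deriv ?_
    ring
  have hker : ∀ y : ℂ, HasDerivAt (fun z' : ℂ => complexOscKernel a z' w t)
      (K * (Complex.exp ((a : ℂ) / 4 * (W ^ 2 - y ^ 2) * T + (a : ℂ) * y * W / (2 * C))
        * (-((a:ℂ)/2) * T * y + (a:ℂ) * W / (2 * C)))) y := by
    intro y
    have := ((hg y).cexp).const_mul K
    simpa only [complexOscKernel] using this
  have hd1 : deriv (fun z' : ℂ => complexOscKernel a z' w t)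
      = fun y : ℂ => K * (Complex.exp ((a : ℂ) / 4 * (W ^ 2 - y ^ 2) * T
          + (a : ℂ) * y * W / (2 * C))
        * (-((a:ℂ)/2) * T * y + (a:ℂ) * W / (2 * C))) := by
    funext y; exact (hker y).deriv
  have hP : HasDerivAt (fun y : ℂ => -((a:ℂ)/2) * T * y + (a:ℂ) * W / (2 * C))
      (-((a:ℂ)/2) * T) z := by
    simpa using (((hasDerivAt_id z).const_mul (-((a:ℂ)/2) * T)).add_const ((a:ℂ) * W / (2 * C)))
  have hd2 : HasDerivAt (fun y : ℂ => K * (Complex.exp ((a : ℂ) / 4 * (W ^ 2 - y ^ 2) * T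
          + (a : ℂ) * y * W / (2 * C))
        * (-((a:ℂ)/2) * T * y + (a:ℂ) * W / (2 * C))))
      (K * ((Complex.exp ((a : ℂ) / 4 * (W ^ 2 - z ^ 2) * T + (a : ℂ) * z * W / (2 * C))
          * (-((a:ℂ)/2) * T * z + (a:ℂ) * W / (2 * C)))
          * (-((a:ℂ)/2) * T * z + (a:ℂ) * W / (2 * C))
        + Complex.exp ((a : ℂ) / 4 * (W ^ 2 - z ^ 2) * T + (a : ℂ) * z * W / (2 * C))
          * (-((a:ℂ)/2) * T))) z :=
    (((hg z).cexp).mul hP).const_mul K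
  rw [iteratedDeriv_succ, iteratedDeriv_one, hd1, hd2.deriv]
  simp only [complexOscKernel]
  set Q : ℂ := Complex.exp ((a : ℂ) / 4 * (W ^ 2 - z ^ 2) * T + (a : ℂ) * z * W / (2 * C)) with hQ
  set U : ℂ := ((Real.exp (-(a * t) / 2) : ℝ) : ℂ) with hU
  set S : ℂ := ((Real.sqrt (Real.cosh (a * t)) : ℝ) : ℂ) with hSdef
  rw [hKdef]
  exact osc_aux (a:ℂ) U S⁻¹ Q T C z W hC hT2C
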